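/- Let C ⊆ R^∞ be the cone generated by the Sym(∞)-orbit of a finite set A contained in the nonnegative orthant. Assume each a ∈ A satisfies supp(a) ⊆ {1,…,|supp(a)|} (i.e., a is supported on an initial segment). Then for every n ≥ 1, C ∩ R^n equals the cone generated by Sym(n)(A ∩ R^n), where R^n is identified with the sequences supported on {1,…,n}. -/

import Mathlib

/-- Action of a permutation of `ℕ` on real sequences: `(σ • u) i = u (σ⁻¹ i)`. -/
def permAct (σ : Equiv.Perm ℕ) (u : ℕ → ℝ) : ℕ → ℝ := fun i => u (σ.symm i)

/-- A permutation of `ℕ` is finitary if it moves only finitely many elements. -/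
def IsFinitary (σ : Equiv.Perm ℕ) : Prop := {i | σ i ≠ i}.Finite

/-- The `Sym(∞)`-orbit of a set of sequences. -/
def symOrbit (A : Set (ℕ → ℝ)) : Set (ℕ → ℝ) :=
  {v | ∃ σ : Equiv.Perm ℕ, IsFinitary σ ∧ ∃ u ∈ A, v = permAct σ u}

/-- Membership in the cone generated by `B`: finite nonnegative real combinations. -/
def inCone (B : Set (ℕ → ℝ)) (u : ℕ → ℝ) : Prop :=
  ∃ (k : ℕ) (c : Fin k → ℝ) (b : Fin k → ℕ → ℝ),
    (∀ i, 0 ≤ c i) ∧ (∀ i, b i ∈ B) ∧ u = ∑ i, c i • b i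

/-- A permutation fixing all indices `≥ n` (an element of `Sym(n)`). -/
def IsSymUpTo (n : ℕ) (σ : Equiv.Perm ℕ) : Prop := ∀ i, n ≤ i → σ i = i

/-- The `Sym(n)`-orbit of a set of sequences. -/
def symNOrbit (n : ℕ) (A : Set (ℕ → ℝ)) : Set (ℕ → ℝ) :=
  {v | ∃ σ : Equiv.Perm ℕ, IsSymUpTo n σ ∧ ∃ u ∈ A, v = permAct σ u}

/-- Any injection of an initial segment `[0,m)` into `[0,n)` coming from a permutation of `ℕ`
extends to a permutation of `ℕ` fixing everything `≥ n`. -/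
lemma exists_perm_extend (m n : ℕ) (hmn : m ≤ n) (σ : Equiv.Perm ℕ)
    (hσ : ∀ i, i < m → σ i < n) :
    ∃ τ : Equiv.Perm ℕ, (∀ i, n ≤ i → τ i = i) ∧ ∀ i, i < m → τ i = σ i := by
  classical
  set p : Fin n → Prop := fun x => (x : ℕ) < m with hp
  set q : Fin n → Prop := fun x => ∃ j : Fin n, (j : ℕ) < m ∧ σ j = x with hq
  have hg : Function.Bijective (fun x : {x : Fin n // p x} =>
      (⟨⟨σ x.1, hσ x.1 x.2⟩, ⟨x.1, x.2, rfl⟩⟩ : {x : Fin n // q x})) := by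
    constructor
    · rintro ⟨x, hx⟩ ⟨y, hy⟩ h
      simp only [Subtype.mk.injEq, Fin.mk.injEq] at h
      exact Subtype.ext (Fin.val_injective (σ.injective h))
    · rintro ⟨x, j, hj, hjx⟩
      exact ⟨⟨j, hj⟩, Subtype.ext (Fin.val_injective hjx)⟩
  set e : {x : Fin n // p x} ≃ {x : Fin n // q x} := Equiv.ofBijective _ hg with he
  have hcard : Fintype.card {x : Fin n // ¬ p x} = Fintype.card {x : Fin n // ¬ q x} := by
    rw [Fintype.card_subtype_compl, Fintype.card_subtype_compl, Fintype.card_congr e]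
  set f : {x : Fin n // ¬ p x} ≃ {x : Fin n // ¬ q x} := Fintype.equivOfCardEq hcard
  set τ₀ : Equiv.Perm (Fin n) := Equiv.subtypeCongr e f
  refine ⟨τ₀.extendDomain Fin.equivSubtype, fun i hi => ?_, fun i hi => ?_⟩
  · exact Equiv.Perm.extendDomain_apply_not_subtype _ _ (by omega)
  · have hin : i < n := lt_of_lt_of_le hi hmn
    have : Fin.equivSubtype (⟨i, hin⟩ : Fin n) = ⟨i, hin⟩ := rfl
    have h2 := Equiv.Perm.extendDomain_apply_image τ₀ Fin.equivSubtype (⟨i, hin⟩ : Fin n)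
    rw [this] at h2
    have h3 : τ₀ ⟨i, hin⟩ = ⟨σ i, hσ i hi⟩ := by
      have hpx : p ⟨i, hin⟩ := hi
      simp only [τ₀, Equiv.subtypeCongr, Equiv.trans_apply, Equiv.symm_apply_eq]
      rw [Equiv.sumCompl_symm_apply_of_pos hpx]
      simp [he]
    simp only [h2, h3]
    rfl

/-- Zero-coefficient generators may be required to lie in `B` only when the coefficient
is nonzero. -/
lemma inCone_of_sum {B : Set (ℕ → ℝ)} {k : ℕ} {c : Fin k → ℝ} {b : Fin k → ℕ → ℝ}
    (hc : ∀ i, 0 ≤ c i) (hb : ∀ i, c i ≠ 0 → b i ∈ B) :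
    inCone B (∑ i, c i • b i) := by
  classical
  set s : Finset (Fin k) := Finset.univ.filter (fun i => c i ≠ 0) with hs
  have e : Fin (Fintype.card {x // x ∈ s}) ≃ {x // x ∈ s} :=
    (Fintype.equivFin {x // x ∈ s}).symm
  refine ⟨_, fun j => c (e j), fun j => b (e j), fun j => hc _, fun j => ?_, ?_⟩
  · have := (e j).2
    simp only [hs, Finset.mem_filter] at this
    exact hb _ this.2
  · rw [Equiv.sum_comp e (fun x : {x // x ∈ s} => c x.1 • b x.1)]
    rw [← Finset.sum_subtype s (fun x => by simp [hs]) (fun i => c i • b i)]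
    rw [Finset.sum_filter_of_ne]
    intro i _ h hci
    exact h (by simp [hci])

lemma orbit_local {A : Set (ℕ → ℝ)} {n : ℕ}
    (hsupp : ∀ a ∈ A, ∃ hf : {i | a i ≠ 0}.Finite, ∀ i, a i ≠ 0 → i < hf.toFinset.card)
    {v : ℕ → ℝ} (hv : v ∈ symOrbit A) (hv0 : ∀ j, n ≤ j → v j = 0) :
    v ∈ symNOrbit n {a ∈ A | ∀ i, n ≤ i → a i = 0} := by
  classical
  obtain ⟨σ, -, a, haA, rfl⟩ := hv
  obtain ⟨hf, hm⟩ := hsupp a haA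
  set m := hf.toFinset.card with hmdef
  have hseg : ∀ i, a i ≠ 0 ↔ i < m := by
    have hsub : hf.toFinset ⊆ Finset.range m := by
      intro i hi
      simp only [Set.Finite.mem_toFinset, Set.mem_setOf_eq] at hi
      exact Finset.mem_range.2 (hm i hi)
    have heq : hf.toFinset = Finset.range m :=
      Finset.eq_of_subset_of_card_le hsub (by simp [hmdef])
    intro i
    constructor
    · exact hm i
    · intro hi
      have : i ∈ hf.toFinset := heq ▸ Finset.mem_range.2 hi
      simpa using this
  have hσm : ∀ i, i < m → σ i < n := by
    intro i hi
    by_contra h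
    have : permAct σ a (σ i) = 0 := hv0 _ (le_of_not_gt h)
    simp only [permAct, Equiv.symm_apply_apply] at this
    exact ((hseg i).2 hi) this
  have hmn : m ≤ n := by
    have : Function.Injective (fun i : Fin m => (⟨σ i, hσm i i.2⟩ : Fin n)) := by
      intro x y h
      simp only [Fin.mk.injEq] at h
      exact Fin.val_injective (σ.injective h)
    simpa using Fintype.card_le_of_injective _ this
  obtain ⟨τ, hτfix, hτagree⟩ := exists_perm_extend m n hmn σ hσm
  refine ⟨τ, hτfix, a, ⟨haA, fun i hi => ?_⟩, ?_⟩
  · by_contra h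
    exact absurd (lt_of_lt_of_le ((hseg i).1 h) hmn) (not_lt.2 hi)
  · funext j
    show a (σ.symm j) = a (τ.symm j)
    by_cases h : a (σ.symm j) = 0
    · by_cases h2 : a (τ.symm j) = 0
      · rw [h, h2]
      · exfalso
        have hlt : τ.symm j < m := (hseg _).1 h2
        have h3 : σ (τ.symm j) = j := by rw [← hτagree _ hlt]; exact τ.apply_symm_apply j
        have h4 : σ.symm j = τ.symm j := (Equiv.symm_apply_eq σ).2 h3.symm
        exact h2 (h4 ▸ h)
    · have hlt : σ.symm j < m := (hseg _).1 h
      have h3 : τ (σ.symm j) = j := by rw [hτagree _ hlt]; exact σ.apply_symm_apply j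
      have heq : τ.symm j = σ.symm j := (Equiv.symm_apply_eq τ).2 h3.symm
      rw [heq]

theorem local_cones_of_equivariant_cone
    (A : Set (ℕ → ℝ)) (hAfin : A.Finite)
    (hpos : ∀ a ∈ A, ∀ i, 0 ≤ a i)
    (hsupp : ∀ a ∈ A, ∃ hf : {i | a i ≠ 0}.Finite, ∀ i, a i ≠ 0 → i < hf.toFinset.card)
    (n : ℕ) (hn : 1 ≤ n) (u : ℕ → ℝ) :
    (inCone (symOrbit A) u ∧ ∀ i, n ≤ i → u i = 0) ↔
      inCone (symNOrbit n {a ∈ A | ∀ i, n ≤ i → a i = 0}) u := by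
  classical
  constructor
  · rintro ⟨⟨k, c, b, hc, hb, rfl⟩, hu0⟩
    have hbpos : ∀ i j, 0 ≤ b i j := by
      intro i j
      obtain ⟨σ, -, a, haA, hbeq⟩ := hb i
      rw [hbeq]
      exact hpos a haA _
    have hb0 : ∀ i, c i ≠ 0 → ∀ j, n ≤ j → b i j = 0 := by
      intro i hci j hj
      have hsum : ∑ i', c i' * b i' j = 0 := by
        have := hu0 j hj
        simpa [Finset.sum_apply] using this
      have hterm : c i * b i j = 0 :=
        (Finset.sum_eq_zero_iff_of_nonneg
          (fun i' _ => mul_nonneg (hc i') (hbpos i' j))).1 hsum i (Finset.mem_univ i)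
      rcases mul_eq_zero.1 hterm with h | h
      · exact absurd h hci
      · exact h
    exact inCone_of_sum hc fun i hci =>
      orbit_local hsupp (hb i) (fun j hj => hb0 i hci j hj)
  · rintro ⟨k, c, b, hc, hb, rfl⟩
    constructor
    · refine ⟨k, c, b, hc, fun i => ?_, rfl⟩
      obtain ⟨σ, hσ, a, ⟨haA, -⟩, hbeq⟩ := hb i
      refine ⟨σ, ?_, a, haA, hbeq⟩
      exact Set.Finite.subset (Set.finite_Iio n) fun j hj => by
        by_contra h
        exact hj (hσ j (le_of_not_gt h))
    · intro j hj
      rw [Finset.sum_apply]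
      refine Finset.sum_eq_zero fun i _ => ?_
      obtain ⟨σ, hσ, a, ⟨-, ha0⟩, hbeq⟩ := hb i
      have hσj : σ.symm j = j := by
        conv_lhs => rw [← hσ j hj]
        exact σ.symm_apply_apply j
      simp [hbeq, permAct, hσj, ha0 j hj]
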